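/- Let R be a commutative ring and t' = [[a,b],[c,d]] ∈ SL₂(R) such that d_n·t'·d_n⁻¹ = t'ⁿ for all integers n ≥ 1, where d_n = [[n,0],[0,1]] (assuming n is invertible in R where needed). Then t' is upper unitriangular: t' = [[1,b],[0,1]] for some b ∈ R. -/
import Mathlib

open Matrix

theorem stmt_16 (R : Type*) [CommRing R] (t' : Matrix (Fin 2) (Fin 2) R)
    (hdet : t'.det = 1)
    (hconj : ∀ n : ℕ, 1 ≤ n →
      !![(n : R), 0; 0, 1] * t' = t' ^ n * !![(n : R), 0; 0, 1]) :
    ∃ b : R, t' = !![1, b; 0, 1] := by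
  set a := t' 0 0 with ha'
  set b := t' 0 1 with hb'
  set c := t' 1 0 with hc'
  set d := t' 1 1 with hd'
  rw [Matrix.det_fin_two] at hdet
  have h2 := hconj 2 (by norm_num)
  have h3 := hconj 3 (by norm_num)
  have p2 : t' ^ 2 = t' * t' := sq t'
  have p3 : t' ^ 3 = t' * t' * t' := by
    rw [show (3:ℕ) = 2+1 from rfl, pow_succ, sq]
  rw [p2] at h2
  rw [p3] at h3
  have e2_10 := congrFun (congrFun h2 1) 0
  have e2_11 := congrFun (congrFun h2 1) 1
  have e3_10 := congrFun (congrFun h3 1) 0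
  have e3_11 := congrFun (congrFun h3 1) 1
  simp [Matrix.mul_apply, Fin.sum_univ_two] at e2_10 e2_11 e3_10 e3_11
  -- e2_10 : c = 2*(c*a + d*c) roughly; etc.
  have hd1 : d = 1 := by
    linear_combination (-(d+a+1)) * e2_11 + (1-d) * hdet + e3_11
  have ha1 : a = 1 := by
    linear_combination hdet - e2_11 - (a + d) * hd1
  have hbc : b * c = 0 := by
    linear_combination -e2_11 - d * hd1
  have h3c : 3 * c = 0 := by
    linear_combination -e2_10 - 2*c*ha1 - 2*c*hd1
  have h8c : 8 * c = 0 := by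
    linear_combination -e3_10 - (3*c*(a+1) + 3*c*d)*ha1 - (3*c + 3*c*(d+1))*hd1 - 3*c*hbc
  have hc0 : c = 0 := by linear_combination 3 * h3c - h8c
  refine ⟨b, ?_⟩
  ext i j
  fin_cases i <;> fin_cases j <;>
    simp [← ha', ← hb', ← hc', ← hd', ha1, hc0, hd1]
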